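/- A group G is left-orderable if and only if for every nontrivial finitely generated subgroup H of G there exists a surjective homomorphism from H onto a nontrivial left-orderable group. -/

import Mathlib

/-- A group is left-orderable if it admits a strict total order invariant under
left multiplication. -/
def LeftOrderable (G : Type*) [Group G] : Prop :=
  ∃ r : G → G → Prop, IsStrictTotalOrder G r ∧ ∀ f g h : G, r g h → r (f * g) (f * h)


lemma mkSTO {α : Type*} {r : α → α → Prop}
    (h1 : ∀ a b, r a b ∨ a = b ∨ r b a) (h2 : ∀ a, ¬ r a a)
    (h3 : ∀ a b c, r a b → r b c → r a c) : IsStrictTotalOrder α r := by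
  haveI : IsTrichotomous α r := ⟨fun a b hab hba => ((h1 a b).resolve_left hab).resolve_right hba⟩
  haveI : IsIrrefl α r := ⟨h2⟩
  haveI : IsTrans α r := ⟨h3⟩
  haveI : IsStrictOrder α r := ⟨⟩
  exact ⟨⟩

open Classical in
lemma burnsHale_signs {G : Type u} [Group G]
    (hyp : ∀ H : Subgroup G, H.FG → H ≠ ⊥ →
        ∃ (L : Type u) (_ : Group L) (φ : H →* L),
          Function.Surjective φ ∧ Nontrivial L ∧ LeftOrderable L) :
    ∀ (n : ℕ) (T : Finset G), T.card = n → (∀ g ∈ T, g ≠ 1) →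
      ∃ Q : Set G, (∀ a ∈ Q, ∀ b ∈ Q, a * b ∈ Q) ∧ (1:G) ∉ Q ∧
        ∀ g ∈ T, g ∈ Q ∨ g⁻¹ ∈ Q := by
  intro n
  induction n using Nat.strong_induction_on with
  | _ n ih =>
    intro T hcard hne
    rcases T.eq_empty_or_nonempty with rfl | ⟨g₀, hg₀⟩
    · exact ⟨∅, by simp, by simp, by simp⟩
    set H := Subgroup.closure (T : Set G) with hHdef
    have hfg : H.FG := ⟨T, rfl⟩
    have hg₀H : g₀ ∈ H := Subgroup.subset_closure hg₀
    have hHbot : H ≠ ⊥ := by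
      intro hb
      exact hne g₀ hg₀ (by simpa [hb, Subgroup.mem_bot] using hg₀H)
    obtain ⟨L, _, φ, hsurj, hnt, rL, hsto, hinvL⟩ := hyp H hfg hHbot
    have htri : ∀ a b : L, rL a b ∨ a = b ∨ rL b a := fun a b => by haveI := hsto; exact trichotomous a b
    have hirr := hsto.toIsStrictOrder.toIrrefl.irrefl
    have htrans := hsto.toIsStrictOrder.toIsTrans.trans
    -- positive cone of L
    have Pmul : ∀ x y : L, rL 1 x → rL 1 y → rL 1 (x * y) := by
      intro x y hx hy
      have := hinvL x 1 y hy
      rw [mul_one] at this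
      exact htrans _ _ _ hx this
    set K : Subgroup G := (φ.ker.map H.subtype) with hKdef
    have hKH : K ≤ H := Subgroup.map_subtype_le _
    have hmemK : ∀ (h : H), (↑h : G) ∈ K → φ h = 1 := by
      intro h hh
      obtain ⟨k, hk, hkh⟩ := hh
      have : k = h := Subtype.ext hkh
      subst this
      exact hk
    have hKmem : ∀ (g : G) (hg : g ∈ H), φ ⟨g, hg⟩ = 1 → g ∈ K := by
      intro g hg h1
      exact ⟨⟨g, hg⟩, h1, rfl⟩
    -- some generator not in the kernel
    have hnotall : ∃ g ∈ T, g ∉ K := by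
      by_contra hall
      push_neg at hall
      have hHK : H ≤ K := by
        rw [hHdef]
        exact Subgroup.closure_le K |>.mpr (fun g hg => hall g hg)
      have : ∀ l : L, l = 1 := by
        intro l
        obtain ⟨h, rfl⟩ := hsurj l
        exact hmemK h (hHK h.2)
      obtain ⟨x, y, hxy⟩ := hnt
      exact hxy ((this x).trans (this y).symm)
    obtain ⟨g₁, hg₁T, hg₁K⟩ := hnotall
    set T₀ : Finset G := T.filter (fun g => g ∈ K) with hT₀def
    have hT₀sub : T₀ ⊆ T := Finset.filter_subset _ _
    have hT₀lt : T₀.card < n := by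
      rw [← hcard]
      apply Finset.card_lt_card
      refine ⟨hT₀sub, fun hsub => hg₁K ?_⟩
      have := hsub hg₁T
      exact (Finset.mem_filter.mp this).2
    obtain ⟨Q₀, hQ₀mul, hQ₀1, hQ₀T⟩ :=
      ih T₀.card hT₀lt T₀ rfl (fun g hg => hne g (hT₀sub hg))
    refine ⟨{x | (∃ hx : x ∈ H, rL 1 (φ ⟨x, hx⟩)) ∨ (x ∈ K ∧ x ∈ Q₀)}, ?_, ?_, ?_⟩
    · rintro a (⟨haH, haP⟩ | ⟨haK, haQ⟩) b (⟨hbH, hbP⟩ | ⟨hbK, hbQ⟩)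
      · refine Or.inl ⟨mul_mem haH hbH, ?_⟩
        have : (⟨a * b, mul_mem haH hbH⟩ : H) = ⟨a, haH⟩ * ⟨b, hbH⟩ := rfl
        rw [this, map_mul]
        exact Pmul _ _ haP hbP
      · refine Or.inl ⟨mul_mem haH (hKH hbK), ?_⟩
        have hb1 : φ ⟨b, hKH hbK⟩ = 1 := hmemK _ hbK
        have : (⟨a * b, mul_mem haH (hKH hbK)⟩ : H) = ⟨a, haH⟩ * ⟨b, hKH hbK⟩ := rfl
        rw [this, map_mul, hb1, mul_one]
        exact haP
      · refine Or.inl ⟨mul_mem (hKH haK) hbH, ?_⟩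
        have ha1 : φ ⟨a, hKH haK⟩ = 1 := hmemK _ haK
        have : (⟨a * b, mul_mem (hKH haK) hbH⟩ : H) = ⟨a, hKH haK⟩ * ⟨b, hbH⟩ := rfl
        rw [this, map_mul, ha1, one_mul]
        exact hbP
      · exact Or.inr ⟨mul_mem haK hbK, hQ₀mul _ haQ _ hbQ⟩
    · rintro (⟨h1, hP⟩ | ⟨-, hQ⟩)
      · have : (⟨(1:G), h1⟩ : H) = 1 := rfl
        rw [this, map_one] at hP
        exact hirr _ hP
      · exact hQ₀1 hQ
    · intro g hgT
      by_cases hgK : g ∈ K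
      · have hg₀mem : g ∈ T₀ := Finset.mem_filter.mpr ⟨hgT, hgK⟩
        rcases hQ₀T g hg₀mem with h | h
        · exact Or.inl (Or.inr ⟨hgK, h⟩)
        · exact Or.inr (Or.inr ⟨inv_mem hgK, h⟩)
      · have hgH : g ∈ H := Subgroup.subset_closure hgT
        have hφg : φ ⟨g, hgH⟩ ≠ 1 := fun h => hgK (hKmem g hgH h)
        rcases htri 1 (φ ⟨g, hgH⟩) with h | h | h
        · exact Or.inl (Or.inl ⟨hgH, h⟩)
        · exact absurd h.symm hφg
        · refine Or.inr (Or.inl ⟨inv_mem hgH, ?_⟩)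
          have hinv : (⟨g⁻¹, inv_mem hgH⟩ : H) = (⟨g, hgH⟩)⁻¹ := rfl
          rw [hinv, map_inv]
          have := hinvL (φ ⟨g, hgH⟩)⁻¹ _ _ h
          simpa using this

/-- **Burns–Hale theorem.** A group `G` is left-orderable iff every nontrivial
finitely generated subgroup surjects onto a nontrivial left-orderable group. -/
theorem burnsHale {G : Type u} [Group G] :
    LeftOrderable G ↔
      ∀ H : Subgroup G, H.FG → H ≠ ⊥ →
        ∃ (L : Type u) (_ : Group L) (φ : H →* L),
          Function.Surjective φ ∧ Nontrivial L ∧ LeftOrderable L := by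
  constructor
  · rintro ⟨r, hsto, hinv⟩ H hfg hbot
    have htri : ∀ a b : G, r a b ∨ a = b ∨ r b a := fun a b => by haveI := hsto; exact trichotomous a b
    have hirr := hsto.toIsStrictOrder.toIrrefl.irrefl
    have htrans := hsto.toIsStrictOrder.toIsTrans.trans
    refine ⟨H, inferInstance, MonoidHom.id H, Function.surjective_id, ?_, ?_⟩
    · exact H.nontrivial_iff_ne_bot.mpr hbot
    · refine ⟨fun a b => r ↑a ↑b, mkSTO ?_ ?_ ?_, ?_⟩
      · intro a b
        rcases htri ↑a ↑b with h | h | h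
        · exact Or.inl h
        · exact Or.inr (Or.inl (Subtype.ext h))
        · exact Or.inr (Or.inr h)
      · exact fun a => hirr ↑a
      · exact fun a b c hab hbc => htrans _ _ _ hab hbc
      · intro f g h hgh
        exact hinv ↑f ↑g ↑h hgh
  · intro hyp
    classical
    obtain ⟨𝒰, h𝒰⟩ : ∃ 𝒰 : Ultrafilter (Finset G), (↑𝒰 : Filter (Finset G)) ≤ Filter.atTop :=
      ⟨Ultrafilter.of Filter.atTop, Ultrafilter.of_le _⟩
    have hex : ∀ T : Finset G,
        ∃ Q : Set G, (∀ a ∈ Q, ∀ b ∈ Q, a * b ∈ Q) ∧ (1:G) ∉ Q ∧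
          ∀ g ∈ T.filter (fun g => g ≠ (1:G)), g ∈ Q ∨ g⁻¹ ∈ Q := by
      intro T
      exact burnsHale_signs hyp _ _ rfl (fun g hg => (Finset.mem_filter.mp hg).2)
    choose Q hmul h1 hcov using hex
    set c : G → Prop := fun g => {T | g ∈ Q T} ∈ 𝒰 with hc
    have cmul : ∀ g h : G, c g → c h → c (g * h) := by
      intro g h hg hh
      refine Filter.mem_of_superset (Filter.inter_mem hg hh) ?_
      rintro T ⟨hgT, hhT⟩
      exact hmul T _ hgT _ hhT
    have c1 : ¬ c 1 := by
      have : {T : Finset G | (1:G) ∈ Q T} = ∅ := by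
        ext T; simp [h1 T]
      rw [hc]
      simp only [this]
      exact Filter.empty_notMem _
    have ctot : ∀ g : G, g ≠ 1 → c g ∨ c g⁻¹ := by
      intro g hg
      have hmem : {T : Finset G | g ∈ T} ∈ 𝒰 := by
        apply h𝒰
        refine Filter.mem_of_superset (Filter.mem_atTop {g}) ?_
        intro T hT
        exact hT (Finset.mem_singleton_self g)
      have hsub : {T : Finset G | g ∈ T} ⊆ {T | g ∈ Q T} ∪ {T | g⁻¹ ∈ Q T} := by
        intro T hT
        exact hcov T g (Finset.mem_filter.mpr ⟨hT, hg⟩)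
      have := (𝒰 : Filter (Finset G)).mem_of_superset hmem hsub
      exact Ultrafilter.union_mem_iff.mp this
    refine ⟨fun g h => c (g⁻¹ * h), mkSTO ?_ ?_ ?_, ?_⟩
    · intro g h
      by_cases hgh : g = h
      · exact Or.inr (Or.inl hgh)
      · have hne : g⁻¹ * h ≠ 1 := fun e => hgh (inv_mul_eq_one.mp e)
        rcases ctot _ hne with h' | h'
        · exact Or.inl h'
        · refine Or.inr (Or.inr ?_)
          simpa [mul_inv_rev] using h'
    · intro g
      simp only [inv_mul_cancel]
      exact c1
    · intro g h k hgh hhk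
      have := cmul _ _ hgh hhk
      simpa [mul_assoc] using this
    · intro f g h hgh
      simpa [mul_assoc, mul_inv_rev] using hgh
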